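/- Let u, v be positive C² functions (u on [-L,L], v on [L,∞), v and v' decaying at infinity) solving -u'' + ε²u - (p+1)u^{2p+1} = 0 and -v'' + ε²v - (p+1)v^{2p+1} = 0, satisfying u(L) = u(-L) = v(L) and u'(L) - u'(-L) = v'(L). If (U,V) = (a·u, b·v) with a ∈ C¹([-L,L]), b ∈ C¹([L,∞)) satisfies the same Kirchhoff conditions and a·u, b·v decay appropriately, then the quadratic form E(U,V) = ∫_{-L}^L[(U')² + ε²U² - (p+1)u^{2p}U²] + ∫_L^∞[(V')² + ε²V² - (p+1)v^{2p}V²] equals ∫_{-L}^L (a')²u² + ∫_L^∞ (b')²v² ≥ 0. -/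

import Mathlib

open Real Filter MeasureTheory Set

lemma aux_tendsto_zero_of_integrableOn {f : ℝ → ℝ} {L c : ℝ}
    (hf : IntegrableOn f (Ioi L)) (hc : Tendsto f atTop (nhds c)) : c = 0 := by
  by_contra h
  have habs : (0:ℝ) < |c| := abs_pos.mpr h
  have h2 : (0:ℝ) < |c| / 2 := by linarith
  have hev : ∀ᶠ x in atTop, |c| / 2 < |f x| :=
    (hc.abs).eventually (eventually_gt_nhds (by linarith))
  obtain ⟨M, hM⟩ := eventually_atTop.mp hev
  set M' := max M L with hM'
  have hf' : IntegrableOn f (Ioi M') := hf.mono_set (Ioi_subset_Ioi (le_max_right _ _))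
  have hconst : Integrable (fun _ : ℝ => |c| / 2) (volume.restrict (Ioi M')) := by
    refine hf'.abs.mono' aestronglyMeasurable_const ?_
    refine (ae_restrict_iff' measurableSet_Ioi).2 (Eventually.of_forall fun x hx => ?_)
    have h3 : |c| / 2 ≤ |f x| := (hM x (le_trans (le_max_left M L) hx.le)).le
    simpa [abs_of_nonneg h2.le] using h3
  rcases integrable_const_iff.mp hconst with h0 | hfin
  · exact absurd h0 (by positivity)
  · replace hfin := measure_lt_top (volume.restrict (Ioi M')) univ
    rw [Measure.restrict_apply_univ, Real.volume_Ioi] at hfin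
    exact absurd hfin (by simp)

theorem stmt19 (p ε L : ℝ) (hp : 0 < p) (hL : 0 < L)
    (u v a b : ℝ → ℝ)
    (hu : ContDiff ℝ 2 u) (hv : ContDiff ℝ 2 v)
    (ha : ContDiff ℝ 1 a) (hb : ContDiff ℝ 1 b)
    (hupos : ∀ x ∈ Icc (-L) L, 0 < u x) (hvpos : ∀ x ∈ Ici L, 0 < v x)
    (hueq : ∀ x ∈ Icc (-L) L,
      -(deriv (deriv u) x) + ε ^ 2 * u x - (p + 1) * (u x) ^ (2 * p + 1) = 0)
    (hveq : ∀ x ∈ Ici L,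
      -(deriv (deriv v) x) + ε ^ 2 * v x - (p + 1) * (v x) ^ (2 * p + 1) = 0)
    (hK1 : u L = u (-L)) (hK2 : u L = v L)
    (hK3 : deriv u L - deriv u (-L) = deriv v L)
    (hK1' : a L * u L = a (-L) * u (-L)) (hK2' : a L * u L = b L * v L)
    (hK3' : deriv (fun x => a x * u x) L - deriv (fun x => a x * u x) (-L)
      = deriv (fun x => b x * v x) L)
    (hvdec : Tendsto v atTop (nhds 0)) (hvdec' : Tendsto (deriv v) atTop (nhds 0))
    (hUdec : Tendsto (fun x => b x * v x) atTop (nhds 0))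
    (hUdec' : Tendsto (deriv (fun x => b x * v x)) atTop (nhds 0))
    (hint1 : IntegrableOn (fun x =>
      (deriv (fun x => b x * v x) x) ^ 2 + (b x * v x) ^ 2) (Ioi L))
    (hint2 : IntegrableOn (fun x => (deriv b x) ^ 2 * (v x) ^ 2) (Ioi L)) :
    ((∫ x in (-L)..L,
        (deriv (fun x => a x * u x) x) ^ 2 + ε ^ 2 * (a x * u x) ^ 2
          - (p + 1) * (u x) ^ (2 * p) * (a x * u x) ^ 2)
      + ∫ x in Ioi L,
        (deriv (fun x => b x * v x) x) ^ 2 + ε ^ 2 * (b x * v x) ^ 2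
          - (p + 1) * (v x) ^ (2 * p) * (b x * v x) ^ 2)
      = (∫ x in (-L)..L, (deriv a x) ^ 2 * (u x) ^ 2)
        + ∫ x in Ioi L, (deriv b x) ^ 2 * (v x) ^ 2 ∧
    (0:ℝ) ≤ (∫ x in (-L)..L, (deriv a x) ^ 2 * (u x) ^ 2)
        + ∫ x in Ioi L, (deriv b x) ^ 2 * (v x) ^ 2 := by
  have hL' : -L ≤ L := by linarith
  -- differentiability / continuity facts
  have hud : Differentiable ℝ u := hu.differentiable (by norm_num)
  have hvd : Differentiable ℝ v := hv.differentiable (by norm_num)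
  have had : Differentiable ℝ a := ha.differentiable (by norm_num)
  have hbd : Differentiable ℝ b := hb.differentiable (by norm_num)
  have hu1 : ContDiff ℝ 1 (deriv u) :=
    (contDiff_succ_iff_deriv.mp (show ContDiff ℝ (1+1) u by norm_num [hu])).2.2
  have hv1 : ContDiff ℝ 1 (deriv v) :=
    (contDiff_succ_iff_deriv.mp (show ContDiff ℝ (1+1) v by norm_num [hv])).2.2
  have hud' : Differentiable ℝ (deriv u) := hu1.differentiable (by norm_num)
  have hvd' : Differentiable ℝ (deriv v) := hv1.differentiable (by norm_num)
  have hca' : Continuous (deriv a) := ha.continuous_deriv le_rfl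
  have hcb' : Continuous (deriv b) := hb.continuous_deriv le_rfl
  have hcu' : Continuous (deriv u) := hu1.continuous
  have hcv' : Continuous (deriv v) := hv1.continuous
  have hcu'' : Continuous (deriv (deriv u)) := hu1.continuous_deriv le_rfl
  have hcv'' : Continuous (deriv (deriv v)) := hv1.continuous_deriv le_rfl
  -- derivatives of the products
  have hdU : ∀ x, HasDerivAt (fun x => a x * u x) (deriv a x * u x + a x * deriv u x) x :=
    fun x => (had x).hasDerivAt.mul (hud x).hasDerivAt
  have hdUeq : ∀ x, deriv (fun x => a x * u x) x = deriv a x * u x + a x * deriv u x :=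
    fun x => (hdU x).deriv
  have hdV : ∀ x, HasDerivAt (fun x => b x * v x) (deriv b x * v x + b x * deriv v x) x :=
    fun x => (hbd x).hasDerivAt.mul (hvd x).hasDerivAt
  have hdVeq : ∀ x, deriv (fun x => b x * v x) x = deriv b x * v x + b x * deriv v x :=
    fun x => (hdV x).deriv
  -- boundary functions
  set G : ℝ → ℝ := fun x => a x ^ 2 * (u x * deriv u x) with hGdef
  set G' : ℝ → ℝ := fun x => 2 * a x * deriv a x * (u x * deriv u x)
      + a x ^ 2 * (deriv u x * deriv u x + u x * deriv (deriv u) x) with hG'def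
  have hG : ∀ x, HasDerivAt G (G' x) x := by
    intro x
    have h1 : HasDerivAt (fun x => a x ^ 2) (2 * a x * deriv a x) x := by
      have := ((had x).hasDerivAt).fun_pow 2
      refine this.congr_deriv ?_
      push_cast
      ring
    have h2 : HasDerivAt (fun x => u x * deriv u x)
        (deriv u x * deriv u x + u x * deriv (deriv u) x) x :=
      (hud x).hasDerivAt.mul (hud' x).hasDerivAt
    exact h1.mul h2
  have hcG' : Continuous G' := by fun_prop
  set H : ℝ → ℝ := fun x => b x ^ 2 * (v x * deriv v x) with hHdef
  set H' : ℝ → ℝ := fun x => 2 * b x * deriv b x * (v x * deriv v x)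
      + b x ^ 2 * (deriv v x * deriv v x + v x * deriv (deriv v) x) with hH'def
  have hH : ∀ x, HasDerivAt H (H' x) x := by
    intro x
    have h1 : HasDerivAt (fun x => b x ^ 2) (2 * b x * deriv b x) x := by
      have := ((hbd x).hasDerivAt).fun_pow 2
      refine this.congr_deriv ?_
      push_cast
      ring
    have h2 : HasDerivAt (fun x => v x * deriv v x)
        (deriv v x * deriv v x + v x * deriv (deriv v) x) x :=
      (hvd x).hasDerivAt.mul (hvd' x).hasDerivAt
    exact h1.mul h2
  have hcH' : Continuous H' := by fun_prop
  -- pointwise identity on the interval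
  have hEqOn1 : EqOn (fun x => (deriv (fun x => a x * u x) x) ^ 2 + ε ^ 2 * (a x * u x) ^ 2
      - (p + 1) * (u x) ^ (2 * p) * (a x * u x) ^ 2)
      (fun x => (deriv a x) ^ 2 * (u x) ^ 2 + G' x) (Icc (-L) L) := by
    intro x hx
    have hx0 : 0 < u x := hupos x hx
    have hode := hueq x hx
    have hdd : deriv (deriv u) x = ε ^ 2 * u x - (p + 1) * u x ^ (2 * p + 1) := by linarith
    have hpow : u x ^ (2 * p + 1) = u x ^ (2 * p) * u x := by
      rw [Real.rpow_add hx0, Real.rpow_one]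
    simp only [hG'def, hdUeq x, hdd, hpow]
    ring
  -- pointwise identity on the half line
  have hEqOn2 : EqOn (fun x => (deriv (fun x => b x * v x) x) ^ 2 + ε ^ 2 * (b x * v x) ^ 2
      - (p + 1) * (v x) ^ (2 * p) * (b x * v x) ^ 2)
      (fun x => (deriv b x) ^ 2 * (v x) ^ 2 + H' x) (Ioi L) := by
    intro x hx
    have hx0 : 0 < v x := hvpos x (le_of_lt (show L < x from hx))
    have hode := hveq x (le_of_lt (show L < x from hx))
    have hdd : deriv (deriv v) x = ε ^ 2 * v x - (p + 1) * v x ^ (2 * p + 1) := by linarith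
    have hpow : v x ^ (2 * p + 1) = v x ^ (2 * p) * v x := by
      rw [Real.rpow_add hx0, Real.rpow_one]
    simp only [hH'def, hdVeq x, hdd, hpow]
    ring
  -- the finite-interval integral
  have hIa : IntervalIntegrable (fun x => (deriv a x) ^ 2 * (u x) ^ 2) volume (-L) L :=
    (Continuous.intervalIntegrable (by fun_prop)) _ _
  have hIG' : IntervalIntegrable G' volume (-L) L := hcG'.intervalIntegrable _ _
  have hFin : (∫ x in (-L)..L,
      (deriv (fun x => a x * u x) x) ^ 2 + ε ^ 2 * (a x * u x) ^ 2
        - (p + 1) * (u x) ^ (2 * p) * (a x * u x) ^ 2)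
      = (∫ x in (-L)..L, (deriv a x) ^ 2 * (u x) ^ 2) + (G L - G (-L)) := by
    rw [intervalIntegral.integral_congr (by rwa [uIcc_of_le hL'])]
    rw [intervalIntegral.integral_add hIa hIG',
      intervalIntegral.integral_eq_sub_of_hasDerivAt (fun x _ => hG x) hIG']
  -- integrability on the half line
  have hmeas : MeasurableSet (Ioi L) := measurableSet_Ioi
  have hcV : Continuous (fun x => b x * v x) := by fun_prop
  have hcV' : Continuous (deriv (fun x => b x * v x)) := by
    have : (deriv (fun x => b x * v x)) = fun x => deriv b x * v x + b x * deriv v x :=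
      funext hdVeq
    rw [this]; fun_prop
  have hiV2 : IntegrableOn (fun x => (b x * v x) ^ 2) (Ioi L) := by
    refine hint1.mono' ((hcV.pow 2).aestronglyMeasurable) ?_
    refine Eventually.of_forall fun x => ?_
    have h1 : (0:ℝ) ≤ (deriv (fun x => b x * v x) x) ^ 2 := sq_nonneg _
    have h2 : (0:ℝ) ≤ (b x * v x) ^ 2 := sq_nonneg _
    simp only [Real.norm_eq_abs, abs_of_nonneg h2]
    linarith
  have hiV'2 : IntegrableOn (fun x => (deriv (fun x => b x * v x) x) ^ 2) (Ioi L) := by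
    refine hint1.mono' ((hcV'.pow 2).aestronglyMeasurable) ?_
    refine Eventually.of_forall fun x => ?_
    have h1 : (0:ℝ) ≤ (deriv (fun x => b x * v x) x) ^ 2 := sq_nonneg _
    have h2 : (0:ℝ) ≤ (b x * v x) ^ 2 := sq_nonneg _
    simp only [Real.norm_eq_abs, abs_of_nonneg h1]
    linarith
  -- a uniform bound for v on [L, ∞)
  obtain ⟨M, hM⟩ : ∃ M, ∀ x ≥ M, v x ≤ 1 := by
    have h1 : ∀ᶠ x in atTop, v x < 1 := hvdec.eventually (eventually_lt_nhds one_pos)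
    obtain ⟨M, hM⟩ := eventually_atTop.mp h1
    exact ⟨M, fun x hx => (hM x hx).le⟩
  obtain ⟨z, hz, hzmax⟩ : ∃ z ∈ Icc L (max L M), ∀ y ∈ Icc L (max L M), v y ≤ v z := by
    obtain ⟨z, hz, hzm⟩ := isCompact_Icc.exists_isMaxOn (nonempty_Icc.mpr (le_max_left L M))
      (hvd.continuous.continuousOn)
    exact ⟨z, hz, fun y hy => hzm hy⟩
  set C : ℝ := max 1 (v z) with hCdef
  have hC1 : (1:ℝ) ≤ C := le_max_left _ _
  have hC0 : (0:ℝ) < C := lt_of_lt_of_le one_pos hC1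
  have hvC : ∀ x ∈ Ici L, v x ≤ C := by
    intro x hx
    rcases le_or_gt x (max L M) with hxle | hxgt
    · exact le_trans (hzmax x ⟨hx, hxle⟩) (le_max_right _ _)
    · exact le_trans (hM x (le_of_lt (lt_of_le_of_lt (le_max_right L M) hxgt))) hC1
  have hvpow : ∀ x ∈ Ici L, v x ^ (2 * p) ≤ C ^ (2 * p) := fun x hx =>
    Real.rpow_le_rpow (le_of_lt (hvpos x hx)) (hvC x hx) (by positivity)
  -- integrability of the potential term
  have hiP : IntegrableOn
      (fun x => (p + 1) * (v x) ^ (2 * p) * (b x * v x) ^ 2) (Ioi L) := by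
    have hg : IntegrableOn (fun x => ((p + 1) * C ^ (2 * p)) * (b x * v x) ^ 2) (Ioi L) :=
      hiV2.const_mul _
    refine hg.mono' ?_ ?_
    · have hcon : ContinuousOn (fun x => (p + 1) * (v x) ^ (2 * p) * (b x * v x) ^ 2) (Ioi L) := by
        refine ContinuousOn.mul (ContinuousOn.mul continuousOn_const ?_)
          ((hcV.pow 2).continuousOn)
        exact ContinuousOn.rpow_const (hvd.continuous.continuousOn)
          (fun x hx => Or.inl (ne_of_gt (hvpos x (le_of_lt (show L < x from hx)))))
      exact hcon.aestronglyMeasurable hmeas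
    · refine (ae_restrict_iff' hmeas).2 (Eventually.of_forall fun x hx => ?_)
      have h1 : (0:ℝ) ≤ v x ^ (2 * p) := Real.rpow_nonneg (le_of_lt (hvpos x (le_of_lt (show L < x from hx)))) _
      have h2 : v x ^ (2 * p) ≤ C ^ (2 * p) := hvpow x (le_of_lt (show L < x from hx))
      have h3 : (0:ℝ) ≤ (b x * v x) ^ 2 := sq_nonneg _
      have h4 : (0:ℝ) ≤ p + 1 := by linarith
      rw [Real.norm_eq_abs, abs_of_nonneg (by positivity)]
      exact mul_le_mul_of_nonneg_right (mul_le_mul_of_nonneg_left h2 h4) h3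
  have hiF2 : IntegrableOn (fun x =>
      (deriv (fun x => b x * v x) x) ^ 2 + ε ^ 2 * (b x * v x) ^ 2
        - (p + 1) * (v x) ^ (2 * p) * (b x * v x) ^ 2) (Ioi L) := by
    exact (hiV'2.add (hiV2.const_mul (ε ^ 2))).sub hiP
  have hiH' : IntegrableOn H' (Ioi L) := by
    refine IntegrableOn.congr_fun (hiF2.sub hint2) ?_ hmeas
    intro x hx
    have := hEqOn2 hx
    simp only [Pi.sub_apply] at this ⊢
    linarith
  -- the improper integral of H'
  set I : ℝ := ∫ x in Ioi L, H' x with hIdef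
  have hkey : ∀ x : ℝ, H x = H L + ∫ t in L..x, H' t := by
    intro x
    rw [intervalIntegral.integral_eq_sub_of_hasDerivAt (fun t _ => hH t)
      (hcH'.intervalIntegrable _ _)]
    ring
  have hHt : Tendsto H atTop (nhds (H L + I)) := by
    have h1 : Tendsto (fun x : ℝ => H L + ∫ t in L..x, H' t) atTop (nhds (H L + I)) :=
      tendsto_const_nhds.add (intervalIntegral_tendsto_integral_Ioi L hiH' tendsto_id)
    exact h1.congr fun x => (hkey x).symm
  -- the cross term W and its limit
  set W : ℝ → ℝ := fun x => b x * deriv b x * (v x * v x) with hWdef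
  have hWeq : W = fun x => (b x * v x) * (deriv (fun x => b x * v x) x) - H x := by
    funext x
    simp only [hWdef, hHdef, hdVeq x]
    ring
  have hWt : Tendsto W atTop (nhds (0 * 0 - (H L + I))) := by
    rw [hWeq]
    exact (hUdec.mul hUdec').sub hHt
  have hiW : IntegrableOn W (Ioi L) := by
    have hg : IntegrableOn (fun x => (1/2) * ((deriv b x) ^ 2 * (v x) ^ 2)
        + (1/2) * ((b x * v x) ^ 2)) (Ioi L) :=
      (hint2.const_mul _).add (hiV2.const_mul _)
    have hWm : AEStronglyMeasurable W (volume.restrict (Ioi L)) := by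
      rw [hWdef]
      exact (((hbd.continuous.mul hcb').mul
        (hvd.continuous.mul hvd.continuous))).aestronglyMeasurable
    refine hg.mono' hWm ?_
    refine Eventually.of_forall fun x => ?_
    rw [Real.norm_eq_abs]
    rcases abs_cases (W x) with ⟨he, _⟩ | ⟨he, _⟩ <;>
      · rw [he]
        simp only [hWdef]
        nlinarith [sq_nonneg (deriv b x * v x - b x * v x),
          sq_nonneg (deriv b x * v x + b x * v x)]
  have hczero : 0 * 0 - (H L + I) = 0 := aux_tendsto_zero_of_integrableOn hiW hWt
  have hIval : I = -(H L) := by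
    have : H L + I = 0 := by linarith [hczero]
    linarith
  -- the half-line integral
  have hInf : (∫ x in Ioi L,
      (deriv (fun x => b x * v x) x) ^ 2 + ε ^ 2 * (b x * v x) ^ 2
        - (p + 1) * (v x) ^ (2 * p) * (b x * v x) ^ 2)
      = (∫ x in Ioi L, (deriv b x) ^ 2 * (v x) ^ 2) + I := by
    rw [setIntegral_congr_fun hmeas hEqOn2]
    exact integral_add hint2 hiH'
  -- boundary terms vanish
  have huL : 0 < u L := hupos L ⟨by linarith, le_refl L⟩
  have haL : a (-L) = a L := by
    have h1 : a L * u L = a (-L) * u L := by rw [hK1'] ; rw [← hK1]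
    exact (mul_right_cancel₀ (ne_of_gt huL) h1.symm)
  have hbL : b L = a L := by
    have h1 : a L * u L = b L * u L := by rw [hK2'] ; rw [← hK2]
    exact (mul_right_cancel₀ (ne_of_gt huL) h1).symm
  have e3 : u (-L) = u L := hK1.symm
  have e4 : v L = u L := hK2.symm
  have e5 : deriv v L = deriv u L - deriv u (-L) := hK3.symm
  have hbdry : G L - G (-L) - H L = 0 := by
    simp only [hGdef, hHdef, haL, hbL, e3, e4, e5]
    ring
  constructor
  · rw [hFin, hInf, hIval]
    linarith [hbdry]
  · have h1 : (0:ℝ) ≤ ∫ x in (-L)..L, (deriv a x) ^ 2 * (u x) ^ 2 :=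
      intervalIntegral.integral_nonneg hL' (fun x _ => by positivity)
    have h2 : (0:ℝ) ≤ ∫ x in Ioi L, (deriv b x) ^ 2 * (v x) ^ 2 :=
      setIntegral_nonneg hmeas (fun x _ => by positivity)
    linarith
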